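/- For every 1 ≤ n ≤ N, ∇ₙ ∘ Δₙ = 4·∇ₙ as linear maps A → A, i.e. ∇ₙ(∇ₙ†(∇ₙ(x))) = 4·∇ₙ(x) for all x ∈ A. -/
import Mathlib


/-- In the setting of the differential dynamics of the `D n`,
with `∇ₙ x = i (D n * x - φ x * D n)`, `∇ₙ† x = -i (D n * x + φ x * D n)` and
`Δₙ = ∇ₙ† ∘ ∇ₙ`, one has `∇ₙ ∘ Δₙ = 4 ∇ₙ`, i.e. `∇ₙ (∇ₙ† (∇ₙ x)) = 4 ∇ₙ x` for all `x`. -/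
theorem stmt_2 {A : Type*} [Ring A] [Algebra ℂ A]
    (φ : A →ₐ[ℂ] A) (hφ : ∀ x, φ (φ x) = x)
    {N : ℕ} (D : Fin N → A)
    (hDneg : ∀ n, φ (D n) = - D n)
    (hDanti : ∀ n m, D n * D m + D m * D n = (if n = m then (2 : ℂ) else 0) • (1 : A))
    (grad : Fin N → A →ₗ[ℂ] A)
    (hgrad : ∀ n x, grad n x = Complex.I • (D n * x - φ x * D n))
    (gradAdj : Fin N → A →ₗ[ℂ] A)
    (hgradAdj : ∀ n x, gradAdj n x = (-Complex.I) • (D n * x + φ x * D n)) :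
    ∀ n : Fin N, ∀ x : A,
      grad n (gradAdj n (grad n x)) = (4 : ℂ) • grad n x := by
  intro n x
  have hd : D n * D n = 1 := by
    have h := hDanti n n
    simp only [if_pos rfl, ← two_smul ℂ (D n * D n)] at h
    have := smul_right_injective A (two_ne_zero (α := ℂ)) h
    simpa using this
  simp only [hgrad, hgradAdj, map_smul, map_add, map_sub, map_mul, hDneg, hφ,
    map_neg, sub_mul, add_mul, mul_sub, mul_add, smul_sub, smul_add, mul_smul_comm,
    smul_mul_assoc, smul_smul, Complex.I_mul_I,
    neg_mul, mul_neg, neg_neg, neg_smul, smul_neg, hd, mul_one, one_mul, ← mul_assoc]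
  simp only [mul_assoc, hd, mul_one]
  module
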